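/- arXiv:2307.10900 — 3 statements merged into one kernel-verified Lean document; each statement's English description precedes it below -/
import Mathlib

section
/- Let u : ℝ × ℝ → ℝ be a function of the variables (t,x) such that the partial derivatives ∂u/∂t, ∂u/∂x and ∂²u/∂x² exist everywhere and satisfy |∂u/∂t(t,x)| ≤ M and |∂²u/∂x²(t,x)| ≤ M for all (t,x) ∈ ℝ², for some constant M > 0. Then there exists a constant C, depending only on M, such that for all t, t' ∈ ℝ and all x ∈ ℝ, |∂u/∂x(t,x) − ∂u/∂x(t',x)| ≤ C·|t − t'|^{1/2}; that is, ∂u/∂x satisfies a Hölder condition of order 1/2 in t, uniformly with respect to x. -/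
/-- Mean value inequality on all of ℝ. -/
lemma mvt_aux (f f' : ℝ → ℝ) (C : ℝ) (hf : ∀ y, HasDerivAt f (f' y) y)
    (hC : ∀ y, |f' y| ≤ C) (a b : ℝ) : |f b - f a| ≤ C * |b - a| := by
  have := Convex.norm_image_sub_le_of_norm_hasDerivWithin_le
    (fun y (_ : y ∈ (Set.univ : Set ℝ)) => (hf y).hasDerivWithinAt)
    (fun y _ => hC y) convex_univ (Set.mem_univ a) (Set.mem_univ b)
  simpa [Real.norm_eq_abs] using this

/-- Mean value inequality on an interval. -/
lemma mvt_icc (f f' : ℝ → ℝ) (C a b : ℝ) (hab : a ≤ b)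
    (hf : ∀ y ∈ Set.Icc a b, HasDerivAt f (f' y) y)
    (hC : ∀ y ∈ Set.Icc a b, |f' y| ≤ C) : |f b - f a| ≤ C * |b - a| := by
  have := Convex.norm_image_sub_le_of_norm_hasDerivWithin_le
    (fun y hy => (hf y hy).hasDerivWithinAt)
    (fun y hy => hC y hy) (convex_Icc a b)
    (Set.left_mem_Icc.2 hab) (Set.right_mem_Icc.2 hab)
  simpa [Real.norm_eq_abs] using this

/-- Lemma 1 (Hölder-1/2 continuity in time of the spatial derivative):
if `u : ℝ × ℝ → ℝ` has pointwise partial derivatives `∂u/∂t = ut`,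
`∂u/∂x = ux`, `∂²u/∂x² = uxx` everywhere, with `|ut| ≤ M` and `|uxx| ≤ M`
uniformly for some `M > 0`, then `ux` is Hölder of order `1/2` in `t`,
uniformly in `x`. -/
theorem stmt_0
    (u ut ux uxx : ℝ × ℝ → ℝ) (M : ℝ) (hM : 0 < M)
    (hut : ∀ t x : ℝ, HasDerivAt (fun s : ℝ => u (s, x)) (ut (t, x)) t)
    (hux : ∀ t x : ℝ, HasDerivAt (fun y : ℝ => u (t, y)) (ux (t, x)) x)
    (huxx : ∀ t x : ℝ, HasDerivAt (fun y : ℝ => ux (t, y)) (uxx (t, x)) x)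
    (hbt : ∀ t x : ℝ, |ut (t, x)| ≤ M)
    (hbxx : ∀ t x : ℝ, |uxx (t, x)| ≤ M) :
    ∃ C : ℝ, ∀ t t' x : ℝ,
      |ux (t, x) - ux (t', x)| ≤ C * |t - t'| ^ ((1 : ℝ) / 2) := by
  refine ⟨4 * M, fun t t' x => ?_⟩
  by_cases htt : t = t'
  · simp [htt]
  -- set h = |t - t'|^(1/2)
  have habs : 0 < |t - t'| := abs_pos.2 (sub_ne_zero.2 htt)
  set h : ℝ := |t - t'| ^ ((1 : ℝ) / 2) with hh
  have hpos : 0 < h := Real.rpow_pos_of_pos habs _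
  have hsq : h * h = |t - t'| := by
    rw [hh, ← Real.rpow_add habs]
    norm_num
  -- time Lipschitz bound
  have timeLip : ∀ y : ℝ, |u (t, y) - u (t', y)| ≤ M * |t - t'| :=
    fun y => mvt_aux (fun s => u (s, y)) (fun s => ut (s, y)) M
      (fun s => hut s y) (fun s => hbt s y) t' t
  -- spatial Lipschitz bound for ux
  have uxLip : ∀ t'' y y' : ℝ, |ux (t'', y) - ux (t'', y')| ≤ M * |y - y'| :=
    fun t'' y y' => mvt_aux (fun z => ux (t'', z)) (fun z => uxx (t'', z)) M
      (fun z => huxx t'' z) (fun z => hbxx t'' z) y' y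
  -- Taylor bound: |u(t'', x+h) - u(t'', x) - ux(t'',x)*h| ≤ M*h*h
  have taylor : ∀ t'' : ℝ, |u (t'', x + h) - u (t'', x) - ux (t'', x) * h| ≤ M * h * h := by
    intro t''
    have hg : ∀ y, HasDerivAt (fun z => u (t'', z) - ux (t'', x) * z)
        (ux (t'', y) - ux (t'', x)) y := by
      intro y
      have h1 := hux t'' y
      have h2 : HasDerivAt (fun z : ℝ => ux (t'', x) * z) (ux (t'', x)) y := by
        simpa using (hasDerivAt_id y).const_mul (ux (t'', x))
      exact h1.sub h2
    have hb : ∀ y ∈ Set.Icc x (x + h), |ux (t'', y) - ux (t'', x)| ≤ M * h := by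
      intro y hy
      refine le_trans (uxLip t'' y x) ?_
      have : |y - x| ≤ h := by
        rw [abs_of_nonneg (by linarith [hy.1])]
        linarith [hy.2]
      nlinarith [hM.le]
    have := mvt_icc (fun z => u (t'', z) - ux (t'', x) * z)
      (fun y => ux (t'', y) - ux (t'', x)) (M * h) x (x + h)
      (by linarith) (fun y _ => hg y) hb
    have heq : |x + h - x| = h := by rw [show x + h - x = h by ring, abs_of_pos hpos]
    rw [heq] at this
    calc |u (t'', x + h) - u (t'', x) - ux (t'', x) * h|
        = |(u (t'', x + h) - ux (t'', x) * (x + h)) - (u (t'', x) - ux (t'', x) * x)| := by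
          ring_nf
      _ ≤ M * h * h := this
  -- combine
  have a1 := taylor t
  have a2 := taylor t'
  have a3 := timeLip (x + h)
  have a4 := timeLip x
  rw [← hsq] at a3 a4
  have key : |ux (t, x) - ux (t', x)| * h ≤ 4 * M * (h * h) := by
    have e : |ux (t, x) - ux (t', x)| * h = |ux (t, x) * h - ux (t', x) * h| := by
      rw [show ux (t, x) * h - ux (t', x) * h = (ux (t, x) - ux (t', x)) * h by ring,
        abs_mul, abs_of_pos hpos]
    rw [e]
    have hid : ux (t, x) * h - ux (t', x) * h =
        (u (t, x + h) - u (t', x + h)) - (u (t, x) - u (t', x))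
        - (u (t, x + h) - u (t, x) - ux (t, x) * h)
        + (u (t', x + h) - u (t', x) - ux (t', x) * h) := by ring
    rw [hid]
    calc _ ≤ |(u (t, x + h) - u (t', x + h)) - (u (t, x) - u (t', x))
        - (u (t, x + h) - u (t, x) - ux (t, x) * h)|
        + |u (t', x + h) - u (t', x) - ux (t', x) * h| := abs_add_le _ _
      _ ≤ (|(u (t, x + h) - u (t', x + h)) - (u (t, x) - u (t', x))|
        + |u (t, x + h) - u (t, x) - ux (t, x) * h|) + _ :=
          add_le_add_left (abs_sub _ _) _
      _ ≤ ((|u (t, x + h) - u (t', x + h)| + |u (t, x) - u (t', x)|)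
        + |u (t, x + h) - u (t, x) - ux (t, x) * h|) + _ :=
          add_le_add_left (add_le_add_left (abs_sub _ _) _) _
      _ ≤ 4 * M * (h * h) := by nlinarith
  exact le_of_mul_le_mul_right (by linarith [key]) hpos
end

section
/- Let u : ℝ → ℝ be bounded and measurable, let χ : ℝ → ℝ be continuously differentiable with compact support, and let μ be a measure on ℝ satisfying ∫_ℝ (|s| + |eˢ − 1|) dμ(s) < ∞. For λ > 0 set φ_λ(x) = λ·χ(λx), so that φ_λ'(x) = λ²·χ'(λx). Then lim_{λ→0⁺} ∫_ℝ u(x) · ( ∫_ℝ [ φ_λ(x+s) − φ_λ(x) + (eˢ − 1)·φ_λ'(x) ] dμ(s) ) dx = 0. -/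
open MeasureTheory Filter
open scoped ENNReal

/-- Vanishing of the pairing of a bounded measurable `u` with the adjoint
jump operator applied to the rescaled test function `φ_λ(x) = λ·χ(λx)`:
if `χ` is `C¹` with compact support and `∫ (|s| + |eˢ - 1|) dμ(s) < ∞`, then
`∫ u(x) · (∫ [φ_λ(x+s) - φ_λ(x) + (eˢ - 1)·φ_λ'(x)] dμ(s)) dx → 0`
as `λ → 0⁺`, where `φ_λ'(x) = λ²·χ'(λx)`. -/
theorem stmt_5
    (u χ : ℝ → ℝ)
    (hu_meas : Measurable u) (M : ℝ) (hu_bdd : ∀ x : ℝ, |u x| ≤ M)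
    (hχ : ContDiff ℝ 1 χ) (hχ_supp : HasCompactSupport χ)
    (μ : Measure ℝ)
    (hμ : Integrable (fun s : ℝ => |s| + |Real.exp s - 1|) μ) :
    Tendsto
      (fun l : ℝ => ∫ x : ℝ,
        u x * ∫ s : ℝ,
          (l * χ (l * (x + s)) - l * χ (l * x)
            + (Real.exp s - 1) * (l ^ 2 * deriv χ (l * x))) ∂μ)
      (nhdsWithin 0 (Set.Ioi 0)) (nhds 0) := by
  classical
  -- a bound for the derivative
  obtain ⟨L₀, hL₀⟩ := hχ_supp.deriv.exists_bound_of_continuous (hχ.continuous_deriv le_rfl)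
  set Lc : ℝ := max L₀ 0 with hLcdef
  have hLc0 : (0 : ℝ) ≤ Lc := le_max_right _ _
  have hLd : ∀ y, |deriv χ y| ≤ Lc := fun y =>
    le_trans (by simpa [Real.norm_eq_abs] using hL₀ y) (le_max_left _ _)
  have hlip : ∀ a b : ℝ, |χ b - χ a| ≤ Lc * |b - a| := by
    intro a b
    have := Convex.norm_image_sub_le_of_norm_deriv_le (s := (Set.univ : Set ℝ))
      (fun y _ => (hχ.differentiable one_ne_zero).differentiableAt)
      (fun y _ => by simpa [Real.norm_eq_abs] using hLd y)
      convex_univ (Set.mem_univ a) (Set.mem_univ b)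
    -- reorder args if needed
    simpa [Real.norm_eq_abs] using this
  have hM0 : (0 : ℝ) ≤ M := le_trans (abs_nonneg _) (hu_bdd 0)
  set K : Set ℝ := tsupport χ with hKdef
  have hKc : IsCompact K := hχ_supp
  have hKclosed : IsClosed K := isClosed_tsupport χ
  have hKvol : volume K ≠ ⊤ := hKc.measure_lt_top.ne
  set w : ℝ → ℝ≥0∞ := fun s => ENNReal.ofReal (|s| + |Real.exp s - 1|) with hwdef
  have hw_meas : Measurable w := by
    apply ENNReal.measurable_ofReal.comp
    fun_prop
  set ρ : Measure ℝ := μ.withDensity w with hρdef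
  have hρfin : ρ Set.univ ≠ ⊤ := by
    rw [hρdef, withDensity_apply _ MeasurableSet.univ, Measure.restrict_univ]
    have hfi := hμ.hasFiniteIntegral
    rw [HasFiniteIntegral] at hfi
    have : ∀ s : ℝ, w s = (‖|s| + |Real.exp s - 1|‖ₑ : ℝ≥0∞) := by
      intro s
      rw [Real.enorm_eq_ofReal (by positivity)]
    simpa [this] using hfi.ne
  set vK : ℝ := (volume K).toReal with hvKdef
  set J : ℝ := (ρ Set.univ).toReal with hJdef
  have hvK0 : 0 ≤ vK := ENNReal.toReal_nonneg
  have hJ0 : 0 ≤ J := ENNReal.toReal_nonneg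
  set C : ℝ := 2 * M * Lc * vK * J with hCdef
  have hC0 : 0 ≤ C := by positivity
  refine squeeze_zero_norm' (a := fun l : ℝ => C * l) ?_ ?_
  swap
  · have h : Tendsto (fun l : ℝ => C * l) (nhds 0) (nhds (C * 0)) :=
      (continuous_const.mul continuous_id).tendsto 0
    simpa using h.mono_left nhdsWithin_le_nhds
  filter_upwards [self_mem_nhdsWithin] with l hl
  have hl0 : (0 : ℝ) < l := hl
  have hlne : l ≠ 0 := ne_of_gt hl0
  -- the integrand of the inner integral
  set g : ℝ → ℝ → ℝ := fun x s =>
    l * χ (l * (x + s)) - l * χ (l * x) + (Real.exp s - 1) * (l ^ 2 * deriv χ (l * x))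
    with hgdef
  set S : Set (ℝ × ℝ) := {p : ℝ × ℝ | l * p.1 ∈ K ∨ l * (p.1 + p.2) ∈ K} with hSdef
  have hS : MeasurableSet S := by
    have h1 : Measurable fun p : ℝ × ℝ => l * p.1 := by fun_prop
    have h2 : Measurable fun p : ℝ × ℝ => l * (p.1 + p.2) := by fun_prop
    exact (h1 hKclosed.measurableSet).union (h2 hKclosed.measurableSet)
  -- pointwise bound
  have pointwise : ∀ x s : ℝ, (‖g x s‖₊ : ℝ≥0∞) ≤
      ENNReal.ofReal (l ^ 2 * Lc) * (w s * S.indicator 1 (x, s)) := by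
    intro x s
    by_cases hmem : (x, s) ∈ S
    · rw [Set.indicator_of_mem hmem]
      simp only [Pi.one_apply, mul_one]
      rw [← enorm_eq_nnnorm, Real.enorm_eq_ofReal_abs, hwdef, ← ENNReal.ofReal_mul (by positivity)]
      refine ENNReal.ofReal_le_ofReal ?_
      have h1 : |l * χ (l * (x + s)) - l * χ (l * x)| ≤ l * (Lc * (l * |s|)) := by
        have := hlip (l * x) (l * (x + s))
        have habs : |l * (x + s) - l * x| = l * |s| := by
          have : l * (x + s) - l * x = l * s := by ring
          rw [this, abs_mul, abs_of_pos hl0]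
        rw [habs] at this
        calc |l * χ (l * (x + s)) - l * χ (l * x)|
            = l * |χ (l * (x + s)) - χ (l * x)| := by
              rw [show l * χ (l * (x + s)) - l * χ (l * x)
                  = l * (χ (l * (x + s)) - χ (l * x)) by ring,
                abs_mul, abs_of_pos hl0]
          _ ≤ l * (Lc * (l * |s|)) := by
              apply mul_le_mul_of_nonneg_left this hl0.le
      have h2 : |(Real.exp s - 1) * (l ^ 2 * deriv χ (l * x))| ≤
          |Real.exp s - 1| * (l ^ 2 * Lc) := by
        rw [abs_mul, abs_mul, abs_pow, abs_of_pos hl0]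
        exact mul_le_mul_of_nonneg_left
          (mul_le_mul_of_nonneg_left (hLd _) (by positivity)) (abs_nonneg _)
      calc |g x s| ≤ |l * χ (l * (x + s)) - l * χ (l * x)|
            + |(Real.exp s - 1) * (l ^ 2 * deriv χ (l * x))| := abs_add_le _ _
        _ ≤ l * (Lc * (l * |s|)) + |Real.exp s - 1| * (l ^ 2 * Lc) := add_le_add h1 h2
        _ = l ^ 2 * Lc * (|s| + |Real.exp s - 1|) := by ring
    · have hmem' : l * x ∉ K ∧ l * (x + s) ∉ K := by
        simp only [hSdef, Set.mem_setOf_eq] at hmem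
        push_neg at hmem
        exact ⟨hmem.1, hmem.2⟩
      have e1 : χ (l * x) = 0 := image_eq_zero_of_notMem_tsupport hmem'.1
      have e2 : χ (l * (x + s)) = 0 := image_eq_zero_of_notMem_tsupport hmem'.2
      have e3 : deriv χ (l * x) = 0 := by
        by_contra h
        exact hmem'.1 (support_deriv_subset h)
      have : g x s = 0 := by rw [hgdef]; simp [e1, e2, e3]
      simp [this]
  -- key estimate in ℝ≥0∞
  have key : (‖∫ x : ℝ, u x * ∫ s : ℝ, g x s ∂μ‖₊ : ℝ≥0∞) ≤ ENNReal.ofReal (C * l) := by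
    set c : ℝ≥0∞ := ENNReal.ofReal M * ENNReal.ofReal (l ^ 2 * Lc) with hcdef
    have hcne : c ≠ ⊤ := ENNReal.mul_ne_top ENNReal.ofReal_ne_top ENNReal.ofReal_ne_top
    have hind_meas : Measurable (S.indicator (1 : ℝ × ℝ → ℝ≥0∞)) :=
      measurable_one.indicator hS
    calc (‖∫ x : ℝ, u x * ∫ s : ℝ, g x s ∂μ‖₊ : ℝ≥0∞)
        ≤ ∫⁻ x : ℝ, ‖u x * ∫ s : ℝ, g x s ∂μ‖₊ ∂volume :=
          enorm_integral_le_lintegral_enorm _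
      _ ≤ ∫⁻ x : ℝ, c * ∫⁻ s : ℝ, S.indicator 1 (x, s) ∂ρ ∂volume := by
          refine lintegral_mono fun x => ?_
          have h1 : (‖u x * ∫ s : ℝ, g x s ∂μ‖₊ : ℝ≥0∞)
              = (‖u x‖₊ : ℝ≥0∞) * (‖∫ s : ℝ, g x s ∂μ‖₊ : ℝ≥0∞) := by
            rw [nnnorm_mul]; push_cast; ring
          rw [h1, hcdef, mul_assoc]
          refine mul_le_mul ?_ ?_ zero_le zero_le
          · rw [← enorm_eq_nnnorm, Real.enorm_eq_ofReal_abs]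
            exact ENNReal.ofReal_le_ofReal (hu_bdd x)
          · calc (‖∫ s : ℝ, g x s ∂μ‖₊ : ℝ≥0∞)
                ≤ ∫⁻ s : ℝ, ‖g x s‖₊ ∂μ := enorm_integral_le_lintegral_enorm _
              _ ≤ ∫⁻ s : ℝ, ENNReal.ofReal (l ^ 2 * Lc) * (w s * S.indicator 1 (x, s)) ∂μ :=
                  lintegral_mono fun s => pointwise x s
              _ = ENNReal.ofReal (l ^ 2 * Lc) * ∫⁻ s : ℝ, w s * S.indicator 1 (x, s) ∂μ :=
                  lintegral_const_mul' _ _ ENNReal.ofReal_ne_top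
              _ = ENNReal.ofReal (l ^ 2 * Lc) * ∫⁻ s : ℝ, S.indicator 1 (x, s) ∂ρ := by
                  congr 1
                  exact (lintegral_withDensity_eq_lintegral_mul μ hw_meas
                    (hind_meas.comp (measurable_prodMk_left (x := x)))).symm
      _ = c * ∫⁻ x : ℝ, ∫⁻ s : ℝ, S.indicator 1 (x, s) ∂ρ ∂volume :=
          lintegral_const_mul' _ _ hcne
      _ = c * ∫⁻ s : ℝ, ∫⁻ x : ℝ, S.indicator 1 (x, s) ∂volume ∂ρ := by
          haveI : IsFiniteMeasure ρ := ⟨lt_top_iff_ne_top.mpr hρfin⟩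
          congr 1
          refine lintegral_lintegral_swap ?_
          have : Function.uncurry (fun x s : ℝ => S.indicator (1 : ℝ × ℝ → ℝ≥0∞) (x, s))
              = S.indicator 1 := by
            funext p; cases p; rfl
          rw [this]
          exact hind_meas.aemeasurable
      _ ≤ c * ∫⁻ _ : ℝ, ENNReal.ofReal |l⁻¹| * volume K + ENNReal.ofReal |l⁻¹| * volume K ∂ρ := by
          refine mul_le_mul_right (lintegral_mono fun s => ?_) c
          have heq : (fun x : ℝ => S.indicator (1 : ℝ × ℝ → ℝ≥0∞) (x, s))
              = Set.indicator ((fun x : ℝ => (x, s)) ⁻¹' S) 1 := by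
            funext x
            by_cases h : (x, s) ∈ S <;>
              simp [Set.indicator_apply, Set.mem_preimage, h]
          rw [heq, lintegral_indicator_one
            (measurable_prodMk_right hS)]
          have hsub : ((fun x : ℝ => (x, s)) ⁻¹' S)
              = ((l * ·) ⁻¹' K) ∪ ((fun x : ℝ => x + s) ⁻¹' ((l * ·) ⁻¹' K)) := by
            ext x
            simp [hSdef, Set.mem_preimage, Set.mem_union]
          rw [hsub]
          calc volume (((l * ·) ⁻¹' K) ∪ ((fun x : ℝ => x + s) ⁻¹' ((l * ·) ⁻¹' K)))
              ≤ volume ((l * ·) ⁻¹' K) + volume ((fun x : ℝ => x + s) ⁻¹' ((l * ·) ⁻¹' K)) :=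
                measure_union_le _ _
            _ = ENNReal.ofReal |l⁻¹| * volume K + ENNReal.ofReal |l⁻¹| * volume K := by
                rw [measure_preimage_add_right, Real.volume_preimage_mul_left hlne]
      _ = ENNReal.ofReal (C * l) := by
          rw [lintegral_const]
          have hKvol' : volume K = ENNReal.ofReal vK := (ENNReal.ofReal_toReal hKvol).symm
          have hρ' : ρ Set.univ = ENNReal.ofReal J := (ENNReal.ofReal_toReal hρfin).symm
          have hinv : |l⁻¹| = l⁻¹ := abs_of_pos (inv_pos.mpr hl0)
          rw [hKvol', hρ', hinv, hcdef,
            ← ENNReal.ofReal_mul (by positivity : (0:ℝ) ≤ l⁻¹),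
            ← ENNReal.ofReal_add (by positivity) (by positivity),
            ← ENNReal.ofReal_mul hM0,
            ← ENNReal.ofReal_mul (by positivity : (0:ℝ) ≤ l⁻¹ * vK + l⁻¹ * vK),
            ← ENNReal.ofReal_mul (by positivity : (0:ℝ) ≤ M * (l ^ 2 * Lc))]
          congr 1
          field_simp
          ring
  -- convert back to real numbers
  have habs : |∫ x : ℝ, u x * ∫ s : ℝ, g x s ∂μ| ≤ C * l := by
    have h2 : ENNReal.ofReal |∫ x : ℝ, u x * ∫ s : ℝ, g x s ∂μ|
        ≤ ENNReal.ofReal (C * l) := by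
      rw [← Real.enorm_eq_ofReal_abs]
      exact key
    exact (ENNReal.ofReal_le_ofReal_iff (by positivity)).mp h2
  simpa [Real.norm_eq_abs, hgdef] using habs
end

section
/- Let ν̃ be a finite measure on ℝ² such that ∫_{ℝ²} e^{α(y₁−y₂)} dν̃(y) < ∞ for every α ∈ ℝ, let σ ≠ 0, q₁ ≥ 0 and c > 0. Define f : ℝ → ℝ by f(α) = (σ²/2)·α² − ( σ²/2 + ∫_{ℝ²} (e^{y₁−y₂} − 1) dν̃(y) )·α + ∫_{ℝ²} (e^{α(y₁−y₂)} − 1) dν̃(y) − q₁ − c. Then f(0) = −q₁ − c < 0, f(α) → +∞ as α → −∞, and there exists exactly one α < 0 with f(α) = 0. -/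
open MeasureTheory Filter

section aux

lemma convexOn_affine (d e : ℝ) : ConvexOn ℝ Set.univ (fun x : ℝ => d * x + e) := by
  refine ⟨convex_univ, fun x _ y _ a b ha hb hab => le_of_eq ?_⟩
  simp only [smul_eq_mul]
  linear_combination (-e) * hab

end aux

/-- Existence and uniqueness of the negative root of the characteristic
equation: with `σ ≠ 0`, `q₁ ≥ 0` and `c > 0`, one has `f 0 = -q₁ - c < 0`,
`f(α) → +∞` as `α → -∞`, and there is exactly one `α < 0` with `f α = 0`. -/
theorem stmt_8
    (ν : Measure (ℝ × ℝ)) [IsFiniteMeasure ν]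
    (hexp : ∀ α : ℝ,
      Integrable (fun y : ℝ × ℝ => Real.exp (α * (y.1 - y.2))) ν)
    (σ q₁ c : ℝ) (hσ : σ ≠ 0) (hq₁ : 0 ≤ q₁) (hc : 0 < c)
    (f : ℝ → ℝ)
    (hf : ∀ α : ℝ, f α =
      σ ^ 2 / 2 * α ^ 2
        - (σ ^ 2 / 2 + ∫ y : ℝ × ℝ, (Real.exp (y.1 - y.2) - 1) ∂ν) * α
        + (∫ y : ℝ × ℝ, (Real.exp (α * (y.1 - y.2)) - 1) ∂ν)
        - q₁ - c) :
    f 0 = -q₁ - c ∧ f 0 < 0 ∧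
      Tendsto f atBot atTop ∧
      ∃! α : ℝ, α < 0 ∧ f α = 0 := by
  set B : ℝ := σ ^ 2 / 2 + ∫ y : ℝ × ℝ, (Real.exp (y.1 - y.2) - 1) ∂ν with hB
  set g : ℝ → ℝ := fun α => ∫ y : ℝ × ℝ, (Real.exp (α * (y.1 - y.2)) - 1) ∂ν with hg
  have I1 : ∀ α : ℝ, Integrable (fun y : ℝ × ℝ => Real.exp (α * (y.1 - y.2)) - 1) ν :=
    fun α => (hexp α).sub (integrable_const 1)
  -- f 0
  have hf0 : f 0 = -q₁ - c := by
    rw [hf 0]; simp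
  have hf0neg : f 0 < 0 := by rw [hf0]; linarith
  -- continuity of g
  have gcont : Continuous g := by
    rw [continuous_iff_continuousAt]
    intro x₀
    apply continuousAt_of_dominated
      (bound := fun y : ℝ × ℝ =>
        Real.exp ((x₀ - 1) * (y.1 - y.2)) + Real.exp ((x₀ + 1) * (y.1 - y.2)) + 1)
    · exact Eventually.of_forall fun x => (I1 x).aestronglyMeasurable
    · have hmem : Set.Icc (x₀ - 1) (x₀ + 1) ∈ nhds x₀ :=
        Icc_mem_nhds (by linarith) (by linarith)
      filter_upwards [hmem] with x hx
      refine Filter.Eventually.of_forall fun y => ?_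
      set u := y.1 - y.2
      have hexpb : Real.exp (x * u) ≤ Real.exp ((x₀ - 1) * u) + Real.exp ((x₀ + 1) * u) := by
        rcases le_or_gt 0 u with hu | hu
        · have : x * u ≤ (x₀ + 1) * u := mul_le_mul_of_nonneg_right hx.2 hu
          have := Real.exp_le_exp.2 this
          nlinarith [Real.exp_pos ((x₀ - 1) * u)]
        · have : x * u ≤ (x₀ - 1) * u := mul_le_mul_of_nonpos_right hx.1 hu.le
          have := Real.exp_le_exp.2 this
          nlinarith [Real.exp_pos ((x₀ + 1) * u)]
      have h1 : |Real.exp (x * u) - 1| ≤ Real.exp (x * u) + 1 := by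
        have := Real.exp_pos (x * u)
        rw [abs_le]; constructor <;> nlinarith
      calc ‖Real.exp (x * u) - 1‖ = |Real.exp (x * u) - 1| := rfl
        _ ≤ Real.exp (x * u) + 1 := h1
        _ ≤ Real.exp ((x₀ - 1) * u) + Real.exp ((x₀ + 1) * u) + 1 := by linarith
    · exact ((hexp (x₀ - 1)).add (hexp (x₀ + 1))).add (integrable_const 1)
    · refine Filter.Eventually.of_forall fun y => ?_
      exact (Continuous.continuousAt (by continuity))
  -- convexity of g
  have gconv : ConvexOn ℝ Set.univ g := by
    refine ⟨convex_univ, fun x _ y _ a b ha hb hab => ?_⟩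
    simp only [smul_eq_mul, hg]
    have key : ∀ z : ℝ × ℝ,
        Real.exp ((a * x + b * y) * (z.1 - z.2)) - 1 ≤
          a * (Real.exp (x * (z.1 - z.2)) - 1) + b * (Real.exp (y * (z.1 - z.2)) - 1) := by
      intro z
      set u := z.1 - z.2
      have := convexOn_exp.2 (Set.mem_univ (x * u)) (Set.mem_univ (y * u)) ha hb hab
      simp only [smul_eq_mul] at this
      have heq : (a * x + b * y) * u = a * (x * u) + b * (y * u) := by ring
      rw [heq]
      nlinarith [this]
    have hRHS : Integrable (fun z : ℝ × ℝ =>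
        a * (Real.exp (x * (z.1 - z.2)) - 1) + b * (Real.exp (y * (z.1 - z.2)) - 1)) ν :=
      ((I1 x).const_mul a).add ((I1 y).const_mul b)
    calc (∫ z : ℝ × ℝ, (Real.exp ((a * x + b * y) * (z.1 - z.2)) - 1) ∂ν)
        ≤ ∫ z : ℝ × ℝ, (a * (Real.exp (x * (z.1 - z.2)) - 1)
            + b * (Real.exp (y * (z.1 - z.2)) - 1)) ∂ν :=
          integral_mono (I1 _) hRHS key
      _ = a * (∫ z : ℝ × ℝ, (Real.exp (x * (z.1 - z.2)) - 1) ∂ν)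
            + b * (∫ z : ℝ × ℝ, (Real.exp (y * (z.1 - z.2)) - 1) ∂ν) := by
          rw [integral_add ((I1 x).const_mul a) ((I1 y).const_mul b),
            integral_const_mul, integral_const_mul]
  -- rewrite f
  have hfe : f = fun α => (σ ^ 2 / 2 * α ^ 2 + ((-B) * α + (-q₁ - c))) + g α := by
    funext α; rw [hf α]; simp only [hg]; ring
  -- convexity of f
  have fconv : ConvexOn ℝ Set.univ f := by
    rw [hfe]
    have h1 : ConvexOn ℝ Set.univ (fun α : ℝ => σ ^ 2 / 2 * α ^ 2) := by
      have h0 : ConvexOn ℝ Set.univ fun x : ℝ => x ^ 2 :=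
        Even.convexOn_pow (by norm_num : Even 2)
      exact h0.smul (by positivity)
    exact (h1.add (convexOn_affine (-B) (-q₁ - c))).add gconv
  -- tendsto
  have hσ2 : (0:ℝ) < σ ^ 2 := by positivity
  have glb : ∀ α : ℝ, -(ν Set.univ).toReal ≤ g α := by
    intro α
    have : (∫ _ : ℝ × ℝ, (-1 : ℝ) ∂ν) ≤ g α := by
      apply integral_mono (integrable_const _) (I1 α)
      intro z
      have := Real.exp_pos (α * (z.1 - z.2))
      simp only
      linarith
    simp at this; exact this
  set r : ℝ := B / σ ^ 2 with hr
  set M : ℝ := (ν Set.univ).toReal + q₁ + c with hM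
  set C : ℝ := -(σ ^ 2 / 2 * r ^ 2) - M with hC
  have flb : ∀ α : ℝ, σ ^ 2 / 2 * (α - r) ^ 2 + C ≤ f α := by
    intro α
    rw [hf α]
    have hg1 := glb α
    have hrr : σ ^ 2 * r = B := by
      rw [hr]; field_simp
    have heq : σ ^ 2 / 2 * (α - r) ^ 2 + C =
        σ ^ 2 / 2 * α ^ 2 - B * α - (ν Set.univ).toReal - q₁ - c := by
      rw [hC, hM]; linear_combination (-α) * hrr
    linarith [hg1, heq]
  have ftop : Tendsto f atBot atTop := by
    apply tendsto_atTop_mono flb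
    have h1 : Tendsto (fun α : ℝ => α - r) atBot atBot :=
      tendsto_atBot_add_const_right _ _ tendsto_id
    have h2 : Tendsto (fun α : ℝ => |α - r|) atBot atTop :=
      tendsto_abs_atBot_atTop.comp h1
    have h3 : Tendsto (fun α : ℝ => |α - r| ^ 2) atBot atTop :=
      (tendsto_pow_atTop two_ne_zero).comp h2
    have h4 : Tendsto (fun α : ℝ => σ ^ 2 / 2 * |α - r| ^ 2) atBot atTop :=
      h3.const_mul_atTop (by positivity)
    have h5 : Tendsto (fun α : ℝ => σ ^ 2 / 2 * |α - r| ^ 2 + C) atBot atTop :=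
      tendsto_atTop_add_const_right _ _ h4
    refine h5.congr fun α => ?_
    rw [sq_abs]
  -- uniqueness helper
  have uniq : ∀ x y : ℝ, x < y → y < 0 → f x = 0 → f y = 0 → False := by
    intro x y hxy hy0 hfx hfy
    have hx0 : x < 0 := hxy.trans hy0
    have hxne : x ≠ 0 := ne_of_lt hx0
    set a : ℝ := y / x with ha
    have ha0 : 0 < a := by
      rw [ha]
      have h := div_pos (neg_pos.2 hy0) (neg_pos.2 hx0)
      rwa [neg_div_neg_eq] at h
    have ha1 : a < 1 := by
      have hneg : (y - x) / x < 0 := div_neg_of_pos_of_neg (by linarith) hx0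
      have heq : a - 1 = (y - x) / x := by rw [ha]; field_simp
      linarith
    set b : ℝ := 1 - a with hb
    have hb0 : 0 < b := by simp [hb]; linarith
    have hmem := fconv.2 (Set.mem_univ x) (Set.mem_univ 0) ha0.le hb0.le (by simp [hb])
    have hax : a • x + b • (0:ℝ) = y := by
      simp [smul_eq_mul, ha]
      field_simp
    rw [hax] at hmem
    rw [hfx, hfy] at hmem
    simp only [smul_eq_mul, mul_zero, zero_add] at hmem
    nlinarith [hmem, hf0neg, hb0]
  -- existence
  have hev : ∀ᶠ α in atBot, (1:ℝ) ≤ f α := ftop.eventually (eventually_ge_atTop 1)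
  obtain ⟨a, ha1, hale⟩ := (hev.and (eventually_le_atBot (-1:ℝ))).exists
  have ha0 : a < 0 := by linarith
  have fcont : Continuous f := by
    rw [hfe]
    have hpoly : Continuous fun α : ℝ => σ ^ 2 / 2 * α ^ 2 + ((-B) * α + (-q₁ - c)) :=
      (continuous_const.mul (continuous_pow 2)).add
        ((continuous_const.mul continuous_id).add continuous_const)
    exact hpoly.add gcont
  have hsub := intermediate_value_Icc' ha0.le fcont.continuousOn
  have h0mem : (0:ℝ) ∈ Set.Icc (f 0) (f a) := ⟨hf0neg.le, by linarith⟩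
  obtain ⟨α, hαmem, hfα⟩ := hsub h0mem
  have hαlt : α < 0 := by
    rcases lt_or_eq_of_le hαmem.2 with h | h
    · exact h
    · exfalso; rw [h] at hfα; linarith
  refine ⟨hf0, hf0neg, ftop, α, ⟨hαlt, hfα⟩, ?_⟩
  rintro β ⟨hβ0, hfβ⟩
  rcases lt_trichotomy β α with h | h | h
  · exact absurd (uniq β α h hαlt hfβ hfα) (fun h => h)
  · exact h
  · exact absurd (uniq α β h hβ0 hfα hfβ) (fun h => h)
end
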